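/- (Nonadaptive simulation.) Let T be a natural number, μ₀ > 0 a real number, and m ∈ ℝ^T a vector with ‖m‖₂ ≤ μ₀. Then there exists a single Markov kernel κ from ℝ to ℝ^T such that for every b ∈ ℝ, the multivariate Gaussian distribution N(b·m, I) on ℝ^T equals the composition of the one-dimensional Gaussian N(b·μ₀, 1) with κ (i.e., N(b·m, I) = ∫ κ(w) dN(b·μ₀,1)(w)). In particular the family of distributions {N(b·m, I)}_{b∈ℝ} is a postprocessing of the family {N(b·μ₀, 1)}_{b∈ℝ} by a map not depending on b. -/

import Mathlib

open Matrix MeasureTheory ProbabilityTheory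

/-- The multivariate Gaussian distribution on `ℝ^T` with mean vector `μ` and positive
semidefinite covariance matrix `S`: the law of `μ + √S · Z` where `Z` is a vector of `T`
i.i.d. standard Gaussians (equivalently, the unique measure on `ℝ^T` with characteristic
function `t ↦ exp(i⟨t,μ⟩ - ⟨t, S t⟩/2)`). -/
noncomputable def multivariateGaussian {T : ℕ} (μ : Fin T → ℝ)
    (S : Matrix (Fin T) (Fin T) ℝ) (hS : S.PosSemidef) : Measure (Fin T → ℝ) :=
  (Measure.pi fun _ : Fin T => gaussianReal 0 1).map fun z => μ +
    ((hS.1.eigenvectorUnitary : Matrix (Fin T) (Fin T) ℝ) *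
      diagonal ((RCLike.ofReal : ℝ → ℝ) ∘ Real.sqrt ∘ hS.1.eigenvalues) *
      (star hS.1.eigenvectorUnitary : Matrix (Fin T) (Fin T) ℝ)) *ᵥ z

/-- The Euclidean norm `‖v‖₂ = √(∑ i, v i ^ 2)` of a vector `v ∈ ℝ^T`. -/
noncomputable def euclideanNorm {T : ℕ} (v : Fin T → ℝ) : ℝ :=
  Real.sqrt (∑ i, v i ^ 2)

open Real
open scoped ENNReal

namespace NonadaptiveAux

lemma measurable_consMap (T : ℕ) :
    Measurable (fun p : ℝ × (Fin T → ℝ) => (Fin.cons p.1 p.2 : Fin (T+1) → ℝ)) := by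
  refine measurable_pi_iff.mpr fun i => ?_
  refine Fin.cases ?_ (fun j => ?_) i
  · simpa using measurable_fst
  · simp only [Fin.cons_succ]
    exact (measurable_pi_apply j).comp measurable_snd

lemma gaussian_prod_withDensity :
    (gaussianReal 0 1).prod (gaussianReal 0 1) =
      (volume : Measure (ℝ × ℝ)).withDensity
        (fun p => gaussianPDF 0 1 p.1 * gaussianPDF 0 1 p.2) := by
  refine Measure.prod_eq fun s t hs ht => ?_
  rw [withDensity_apply _ (hs.prod ht), Measure.volume_eq_prod, ← Measure.prod_restrict,
    lintegral_prod (fun p : ℝ × ℝ => gaussianPDF 0 1 p.1 * gaussianPDF 0 1 p.2) ((Measurable.mul ((measurable_gaussianPDF 0 1).comp measurable_fst) ((measurable_gaussianPDF 0 1).comp measurable_snd)) :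
      Measurable fun p : ℝ × ℝ => gaussianPDF 0 1 p.1 * gaussianPDF 0 1 p.2).aemeasurable]
  have h1 : ∀ x : ℝ, ∫⁻ y, gaussianPDF 0 1 x * gaussianPDF 0 1 y ∂(volume.restrict t)
      = gaussianPDF 0 1 x * gaussianReal 0 1 t := by
    intro x
    rw [lintegral_const_mul _ (measurable_gaussianPDF 0 1), gaussianReal_apply 0 one_ne_zero]
  simp only [h1]
  rw [lintegral_mul_const _ (measurable_gaussianPDF 0 1), ← gaussianReal_apply 0 one_ne_zero]

lemma map_withDensity_equiv {α β : Type*} [MeasurableSpace α] [MeasurableSpace β]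
    (e : α ≃ᵐ β) (μ : Measure α) {f : α → ℝ≥0∞} (hf : Measurable f) :
    (μ.withDensity f).map e = (μ.map e).withDensity (fun y => f (e.symm y)) := by
  ext s hs
  rw [Measure.map_apply e.measurable hs, withDensity_apply _ (e.measurable hs),
    withDensity_apply _ hs]
  have hfm : Measurable fun y => f (e.symm y) := hf.comp e.symm.measurable
  rw [setLIntegral_map hs hfm e.measurable]
  refine setLIntegral_congr_fun (e.measurable hs) (fun x _ => ?_)
  simp

lemma volume_map_rot {a c : ℝ} (h : a^2 + c^2 = 1) :
    (volume : Measure (ℝ × ℝ)).map (fun p => (a*p.1 + c*p.2, c*p.1 - a*p.2)) = volume := by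
  have hR : Measurable (fun p : ℝ × ℝ => (a*p.1 + c*p.2, c*p.1 - a*p.2)) := by fun_prop
  set L : (Fin 2 → ℝ) →ₗ[ℝ] (Fin 2 → ℝ) := Matrix.toLin' !![a, c; c, -a] with hL
  have hdet : LinearMap.det L = -1 := by
    rw [hL, LinearMap.det_toLin', Matrix.det_fin_two_of]
    nlinarith [h]
  have hLmeas : Measurable L := L.continuous_of_finiteDimensional.measurable
  have hfun : (fun p : ℝ × ℝ => (a*p.1 + c*p.2, c*p.1 - a*p.2)) ∘
      (MeasurableEquiv.finTwoArrow : (Fin 2 → ℝ) ≃ᵐ ℝ × ℝ) =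
      (MeasurableEquiv.finTwoArrow : (Fin 2 → ℝ) ≃ᵐ ℝ × ℝ) ∘ L := by
    funext v
    simp [hL, MeasurableEquiv.finTwoArrow, Matrix.toLin'_apply, Matrix.mulVec,
      dotProduct, Fin.sum_univ_two, Matrix.vecHead, Matrix.vecTail]
    ring_nf
  have hvol : (volume : Measure (ℝ × ℝ)) =
      Measure.map (MeasurableEquiv.finTwoArrow : (Fin 2 → ℝ) ≃ᵐ ℝ × ℝ) volume :=
    (volume_preserving_finTwoArrow ℝ).map_eq.symm
  rw [hvol, Measure.map_map hR (MeasurableEquiv.measurable _), hfun,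
    ← Measure.map_map (MeasurableEquiv.measurable _) hLmeas,
    Real.map_linearMap_volume_pi_eq_smul_volume_pi (by rw [hdet]; norm_num), hdet]
  norm_num

lemma gaussianPDF_rot {a c : ℝ} (h : a^2 + c^2 = 1) (x y : ℝ) :
    gaussianPDF 0 1 (a*x + c*y) * gaussianPDF 0 1 (c*x - a*y) =
      gaussianPDF 0 1 x * gaussianPDF 0 1 y := by
  simp only [gaussianPDF]
  rw [← ENNReal.ofReal_mul (gaussianPDFReal_nonneg _ _ _),
    ← ENNReal.ofReal_mul (gaussianPDFReal_nonneg _ _ _)]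
  congr 1
  simp only [gaussianPDFReal, NNReal.coe_one, mul_one, sub_zero]
  rw [mul_mul_mul_comm, mul_mul_mul_comm ((√(2 * π))⁻¹) (rexp _), ← Real.exp_add, ← Real.exp_add]
  congr 1
  have : (a*x + c*y)^2 + (c*x - a*y)^2 = x^2 + y^2 := by nlinarith [h]
  field_simp
  congr 1
  linear_combination (-1/2 : ℝ) * this

lemma gaussian2_map_rot {a c : ℝ} (h : a^2 + c^2 = 1) :
    ((gaussianReal 0 1).prod (gaussianReal 0 1)).map
      (fun p : ℝ × ℝ => (a*p.1 + c*p.2, c*p.1 - a*p.2)) =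
      (gaussianReal 0 1).prod (gaussianReal 0 1) := by
  have hR : Measurable (fun p : ℝ × ℝ => (a*p.1 + c*p.2, c*p.1 - a*p.2)) := by fun_prop
  have hinv : ∀ p : ℝ × ℝ,
      (fun p : ℝ × ℝ => (a*p.1 + c*p.2, c*p.1 - a*p.2))
        ((fun p : ℝ × ℝ => (a*p.1 + c*p.2, c*p.1 - a*p.2)) p) = p := by
    rintro ⟨x, y⟩
    simp only [Prod.mk.injEq]
    exact ⟨by linear_combination x * h, by linear_combination y * h⟩
  let e : ℝ × ℝ ≃ᵐ ℝ × ℝ :=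
    { toFun := fun p => (a*p.1 + c*p.2, c*p.1 - a*p.2)
      invFun := fun p => (a*p.1 + c*p.2, c*p.1 - a*p.2)
      left_inv := hinv
      right_inv := hinv
      measurable_toFun := hR
      measurable_invFun := hR }
  have hF : Measurable (fun p : ℝ × ℝ => gaussianPDF 0 1 p.1 * gaussianPDF 0 1 p.2) :=
    Measurable.mul ((measurable_gaussianPDF 0 1).comp measurable_fst)
      ((measurable_gaussianPDF 0 1).comp measurable_snd)
  have he : (fun p : ℝ × ℝ => (a*p.1 + c*p.2, c*p.1 - a*p.2)) = ⇑e := rfl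
  rw [gaussian_prod_withDensity, he, map_withDensity_equiv e volume hF]
  have hmapvol : volume.map ⇑e = volume := by rw [← he]; exact volume_map_rot h
  rw [hmapvol]
  congr 1
  funext p
  obtain ⟨x, y⟩ := p
  exact gaussianPDF_rot h x y

lemma gaussian2_map_rot' {a c : ℝ} (h : a^2 + c^2 = 1) (μ' : ℝ) :
    ((gaussianReal μ' 1).prod (gaussianReal 0 1)).map
      (fun p : ℝ × ℝ => (a*p.1 + c*p.2, c*p.1 - a*p.2)) =
      (gaussianReal (a*μ') 1).prod (gaussianReal (c*μ') 1) := by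
  have hR : Measurable (fun p : ℝ × ℝ => (a*p.1 + c*p.2, c*p.1 - a*p.2)) := by fun_prop
  have h1 : gaussianReal μ' 1 = (gaussianReal 0 1).map (· + μ') := by
    rw [gaussianReal_map_add_const, zero_add]
  have h2 : ((gaussianReal 0 1).map (· + μ')).prod (gaussianReal 0 1) =
      ((gaussianReal 0 1).prod (gaussianReal 0 1)).map (Prod.map (· + μ') id) := by
    rw [← Measure.map_prod_map _ _ (by fun_prop) measurable_id, Measure.map_id]
  have hcomm : (fun p : ℝ × ℝ => (a*p.1 + c*p.2, c*p.1 - a*p.2)) ∘ (Prod.map (· + μ') id) =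
      (Prod.map (· + a*μ') (· + c*μ')) ∘ (fun p : ℝ × ℝ => (a*p.1 + c*p.2, c*p.1 - a*p.2)) := by
    funext p
    obtain ⟨x, y⟩ := p
    simp only [Function.comp_apply, Prod.map_apply, id_eq, Prod.mk.injEq]
    constructor <;> ring
  rw [h1, h2, Measure.map_map hR (by fun_prop), hcomm,
    ← Measure.map_map (by fun_prop : Measurable (Prod.map (· + a*μ') (· + c*μ'))) hR,
    gaussian2_map_rot h,
    ← Measure.map_prod_map _ _ (by fun_prop : Measurable (· + a*μ'))
      (by fun_prop : Measurable (· + c*μ')),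
    gaussianReal_map_add_const, gaussianReal_map_add_const, zero_add, zero_add]

lemma bind_kernel_comp {α β γ' : Type*} [MeasurableSpace α] [MeasurableSpace β]
    [MeasurableSpace γ'] (ν : Measure α) (κ : Kernel α β) (η : Kernel β γ') :
    ν.bind (fun a => (η ∘ₖ κ) a) = (ν.bind fun a => κ a).bind fun b => η b := by
  simp_rw [Kernel.comp_apply]
  exact (Measure.bind_bind κ.measurable.aemeasurable η.measurable.aemeasurable).symm

lemma bind_map_right {α β γ' : Type*} [MeasurableSpace α] [MeasurableSpace β]
    [MeasurableSpace γ'] (ν : Measure α) {f : α → Measure β} (hf : Measurable f)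
    {g : β → γ'} (hg : Measurable g) :
    ν.bind (fun a => (f a).map g) = (ν.bind f).map g := by
  have hdg : Measurable fun x : β => Measure.dirac (g x) :=
    Measure.measurable_dirac.comp hg
  rw [← Measure.bind_dirac_eq_map _ hg, Measure.bind_bind hf.aemeasurable hdg.aemeasurable]
  simp_rw [Measure.bind_dirac_eq_map _ hg]

lemma bind_dirac_prod' {α β : Type*} [MeasurableSpace α] [MeasurableSpace β]
    (μ : Measure α) (ν : Measure β) [SFinite ν] :
    μ.bind (fun x => (Measure.dirac x).prod ν) = μ.prod ν := by
  have hmeas : Measurable fun x : α => (Measure.dirac x).prod ν := by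
    simp_rw [Measure.dirac_prod]
    refine Measure.measurable_of_measurable_coe _ fun s hs => ?_
    simp_rw [Measure.map_apply measurable_prodMk_left hs]
    exact measurable_measure_prodMk_left hs
  ext s hs
  rw [Measure.bind_apply hs hmeas.aemeasurable, Measure.prod_apply hs]
  refine lintegral_congr fun x => ?_
  rw [Measure.dirac_prod, Measure.map_apply measurable_prodMk_left hs]

lemma prod_bind_dirac_kernel {α β δ' : Type*} [MeasurableSpace α] [MeasurableSpace β]
    [MeasurableSpace δ'] (μ₁ : Measure α) [SFinite μ₁] (μ₂ : Measure β)
    [IsProbabilityMeasure μ₂] (κ : Kernel β δ') [IsMarkovKernel κ] :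
    (μ₁.prod μ₂).bind (fun p => (Measure.dirac p.1).prod (κ p.2)) =
      μ₁.prod (μ₂.bind fun w => κ w) := by
  set ρ : Kernel (α × β) (α × δ') :=
    Kernel.deterministic (Prod.fst : α × β → α) measurable_fst ×ₖ
      κ.comap (Prod.snd : α × β → β) measurable_snd with hρ
  have hk : ∀ p : α × β, ρ p = (Measure.dirac p.1).prod (κ p.2) := by
    intro p
    rw [hρ, Kernel.prod_apply, Kernel.deterministic_apply, Kernel.comap_apply]
  have hmeas : Measurable fun p : α × β => (Measure.dirac p.1).prod (κ p.2) := by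
    rw [← funext hk]
    exact ρ.measurable
  have hprob : IsProbabilityMeasure (μ₂.bind fun w => κ w) := by
    constructor
    rw [Measure.bind_apply MeasurableSet.univ κ.measurable.aemeasurable]
    simp
  ext s hs
  have h2 : ∀ p : α × β, ((Measure.dirac p.1).prod (κ p.2)) s = (κ p.2) (Prod.mk p.1 ⁻¹' s) := by
    intro p
    rw [Measure.dirac_prod, Measure.map_apply measurable_prodMk_left hs]
  have hg : Measurable fun p : α × β => (κ p.2) (Prod.mk p.1 ⁻¹' s) := by
    have h3 : (fun p : α × β => (κ p.2) (Prod.mk p.1 ⁻¹' s)) = fun p : α × β => ρ p s := by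
      funext p
      rw [hk p, h2 p]
    rw [h3]
    exact ρ.measurable_coe hs
  rw [Measure.bind_apply hs hmeas.aemeasurable, Measure.prod_apply hs]
  simp_rw [h2]
  rw [lintegral_prod _ hg.aemeasurable]
  refine lintegral_congr fun x => ?_
  rw [Measure.bind_apply (measurable_prodMk_left hs) κ.measurable.aemeasurable]

lemma pi_succ {T : ℕ} (μs : Fin (T+1) → Measure ℝ) [∀ i, IsProbabilityMeasure (μs i)] :
    ((μs 0).prod (Measure.pi fun i => μs i.succ)).map
      (fun p : ℝ × (Fin T → ℝ) => (Fin.cons p.1 p.2 : Fin (T+1) → ℝ)) = Measure.pi μs := by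
  have h := (measurePreserving_piFinSuccAbove μs 0).symm
  have heq : (Measure.pi fun j => μs ((0 : Fin (T+1)).succAbove j)) =
      Measure.pi fun i => μs i.succ := by
    simp only [Fin.succAbove_zero]
  rw [heq] at h
  have hfun : ⇑(MeasurableEquiv.piFinSuccAbove (fun _ : Fin (T+1) => ℝ) 0).symm =
      fun p : ℝ × (Fin T → ℝ) => (Fin.cons p.1 p.2 : Fin (T+1) → ℝ) := by
    funext p
    simp [MeasurableEquiv.piFinSuccAbove, Fin.insertNthEquiv, Fin.insertNth_zero']
  have hmap := h.map_eq
  rw [hfun] at hmap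
  exact hmap

lemma aux_sim : ∀ (T : ℕ) (μ₀ : ℝ), 0 ≤ μ₀ → ∀ m : Fin T → ℝ, (∑ i, m i ^ 2) ≤ μ₀ ^ 2 →
    ∃ κ : Kernel ℝ (Fin T → ℝ), IsMarkovKernel κ ∧ ∀ b : ℝ,
      Measure.pi (fun i => gaussianReal (b * m i) 1) =
        (gaussianReal (b * μ₀) 1).bind fun w => κ w := by
  intro T
  induction T with
  | zero =>
    intro μ₀ _ m _
    refine ⟨Kernel.const ℝ (Measure.pi fun _ : Fin 0 => gaussianReal 0 1), inferInstance,
      fun b => ?_⟩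
    simp only [Kernel.const_apply]
    rw [Measure.bind_const, measure_univ, one_smul]
    rw [Measure.pi_of_empty, Measure.pi_of_empty]
  | succ T IH =>
    intro μ₀ hμ₀ m hsum
    rcases eq_or_lt_of_le hμ₀ with hzero | hpos
    · -- μ₀ = 0
      have hμ₀0 : μ₀ = 0 := hzero.symm
      subst hμ₀0
      have hm : ∀ i, m i = 0 := by
        intro i
        have h1 : (m i) ^ 2 ≤ ∑ j, m j ^ 2 :=
          Finset.single_le_sum (fun j _ => sq_nonneg (m j)) (Finset.mem_univ i)
        nlinarith [sq_nonneg (m i)]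
      refine ⟨Kernel.const ℝ (Measure.pi fun _ : Fin (T+1) => gaussianReal 0 1), inferInstance,
        fun b => ?_⟩
      simp only [Kernel.const_apply]
      rw [Measure.bind_const, measure_univ, one_smul]
      congr 1
      funext i
      rw [hm i, mul_zero]
    · -- μ₀ > 0
      have hμ₀ne : μ₀ ≠ 0 := ne_of_gt hpos
      set μ' := Real.sqrt (μ₀^2 - (m 0)^2) with hμ'def
      have hm0sq : (m 0)^2 ≤ μ₀^2 := by
        have h1 : (m 0) ^ 2 ≤ ∑ j, m j ^ 2 :=
          Finset.single_le_sum (fun j _ => sq_nonneg (m j)) (Finset.mem_univ 0)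
        linarith
      have hμ'sq : μ'^2 = μ₀^2 - (m 0)^2 := Real.sq_sqrt (by linarith)
      have hμ'nn : 0 ≤ μ' := Real.sqrt_nonneg _
      set a := m 0 / μ₀ with ha
      set c := μ' / μ₀ with hc
      have hac : a^2 + c^2 = 1 := by
        rw [ha, hc, div_pow, div_pow, ← add_div, hμ'sq]
        field_simp
        ring
      obtain ⟨κ', hκ'M, hκ'⟩ := IH μ' hμ'nn (fun i => m i.succ) (by
        rw [hμ'sq]
        have h1 := Fin.sum_univ_succ (f := fun i => m i ^ 2)
        linarith)
      haveI := hκ'M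
      have hd : Measurable (fun p : ℝ × ℝ => (a*p.1 + c*p.2, c*p.1 - a*p.2)) := by fun_prop
      set η : Kernel ℝ (ℝ × ℝ) := Kernel.id ×ₖ Kernel.const ℝ (gaussianReal 0 1) with hη
      set ρ : Kernel (ℝ × ℝ) (ℝ × (Fin T → ℝ)) :=
        Kernel.deterministic (Prod.fst : ℝ × ℝ → ℝ) measurable_fst ×ₖ
          κ'.comap (Prod.snd : ℝ × ℝ → ℝ) measurable_snd with hρ
      set K : Kernel ℝ (ℝ × (Fin T → ℝ)) :=
        ρ ∘ₖ (Kernel.deterministic (fun p : ℝ × ℝ => (a*p.1 + c*p.2, c*p.1 - a*p.2)) hd ∘ₖ η)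
        with hK
      refine ⟨Kernel.map K (fun p => (Fin.cons p.1 p.2 : Fin (T+1) → ℝ)),
        Kernel.IsMarkovKernel.map K (measurable_consMap T), fun b => ?_⟩
      have hcons := measurable_consMap T
      have step0 : (gaussianReal (b * μ₀) 1).bind
            (fun w => Kernel.map K (fun p => (Fin.cons p.1 p.2 : Fin (T+1) → ℝ)) w)
          = ((gaussianReal (b * μ₀) 1).bind fun w => K w).map
              (fun p => (Fin.cons p.1 p.2 : Fin (T+1) → ℝ)) := by
        simp_rw [Kernel.map_apply K hcons]
        exact bind_map_right _ K.measurable hcons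
      have step1 : ((gaussianReal (b * μ₀) 1).bind fun w => K w)
          = (((gaussianReal (b * μ₀) 1).bind fun w =>
              (Kernel.deterministic (fun p : ℝ × ℝ => (a*p.1 + c*p.2, c*p.1 - a*p.2)) hd
                ∘ₖ η) w).bind fun p => ρ p) := by
        rw [hK]
        exact bind_kernel_comp _ _ _
      have step2 : ((gaussianReal (b * μ₀) 1).bind fun w =>
            (Kernel.deterministic (fun p : ℝ × ℝ => (a*p.1 + c*p.2, c*p.1 - a*p.2)) hd ∘ₖ η) w)
          = (((gaussianReal (b * μ₀) 1).bind fun w => η w).bind fun q =>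
              Kernel.deterministic (fun p : ℝ × ℝ => (a*p.1 + c*p.2, c*p.1 - a*p.2)) hd q) :=
        bind_kernel_comp _ _ _
      have step3 : ((gaussianReal (b * μ₀) 1).bind fun w => η w)
          = (gaussianReal (b * μ₀) 1).prod (gaussianReal 0 1) := by
        rw [hη]
        simp_rw [Kernel.prod_apply, Kernel.id_apply, Kernel.const_apply]
        exact bind_dirac_prod' _ _
      have step4 : (((gaussianReal (b * μ₀) 1).prod (gaussianReal 0 1)).bind fun q =>
            Kernel.deterministic (fun p : ℝ × ℝ => (a*p.1 + c*p.2, c*p.1 - a*p.2)) hd q)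
          = (gaussianReal (b * m 0) 1).prod (gaussianReal (b * μ') 1) := by
        simp_rw [Kernel.deterministic_apply hd]
        rw [Measure.bind_dirac_eq_map _ hd, gaussian2_map_rot' hac (b * μ₀)]
        have e1 : a * (b * μ₀) = b * m 0 := by
          rw [ha]; field_simp
        have e2 : c * (b * μ₀) = b * μ' := by
          rw [hc]; field_simp
        rw [e1, e2]
      have step5 : (((gaussianReal (b * m 0) 1).prod (gaussianReal (b * μ') 1)).bind
            fun p => ρ p)
          = (gaussianReal (b * m 0) 1).prod
              (Measure.pi fun i => gaussianReal (b * m i.succ) 1) := by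
        rw [hρ]
        have hk : ∀ p : ℝ × ℝ,
            (Kernel.deterministic (Prod.fst : ℝ × ℝ → ℝ) measurable_fst ×ₖ
              κ'.comap (Prod.snd : ℝ × ℝ → ℝ) measurable_snd) p
            = (Measure.dirac p.1).prod (κ' p.2) := by
          intro p
          rw [Kernel.prod_apply, Kernel.deterministic_apply, Kernel.comap_apply]
        simp_rw [hk]
        rw [prod_bind_dirac_kernel, ← hκ' b]
      rw [step0, step1, step2, step3, step4, step5]
      exact (pi_succ (fun i => gaussianReal (b * m i) 1)).symm

end NonadaptiveAux

open NonadaptiveAux in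
/-- Nonadaptive simulation: if `‖m‖₂ ≤ μ₀`, there is a single Markov kernel `κ : ℝ → ℝ^T`,
not depending on `b`, such that for every `b ∈ ℝ` the multivariate Gaussian `N(b • m, I)` is
the composition of the one-dimensional Gaussian `N(b μ₀, 1)` with `κ`. Hence the family
`{N(b • m, I)}_b` is a postprocessing of the family `{N(b μ₀, 1)}_b`. -/
theorem nonadaptive_gaussian_simulation (T : ℕ) (μ₀ : ℝ) (hμ₀ : 0 < μ₀)
    (m : Fin T → ℝ) (hm : euclideanNorm m ≤ μ₀) :
    ∃ κ : Kernel ℝ (Fin T → ℝ), IsMarkovKernel κ ∧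
      ∀ b : ℝ, multivariateGaussian (b • m) 1 Matrix.PosSemidef.one =
        (gaussianReal (b * μ₀) 1).bind fun w => κ w := by
  have hsum : (∑ i, m i ^ 2) ≤ μ₀ ^ 2 := by
    have h1 : 0 ≤ ∑ i, m i ^ 2 := Finset.sum_nonneg fun i _ => sq_nonneg _
    have h2 : Real.sqrt (∑ i, m i ^ 2) ≤ μ₀ := hm
    nlinarith [Real.sq_sqrt h1, Real.sqrt_nonneg (∑ i, m i ^ 2)]
  obtain ⟨κ, hκM, hκ⟩ := aux_sim T μ₀ hμ₀.le m hsum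
  refine ⟨κ, hκM, fun b => ?_⟩
  rw [← hκ b]
  have hsqrt : (((Matrix.PosSemidef.one : (1 : Matrix (Fin T) (Fin T) ℝ).PosSemidef).1.eigenvectorUnitary : Matrix (Fin T) (Fin T) ℝ) *
        diagonal ((RCLike.ofReal : ℝ → ℝ) ∘ Real.sqrt ∘ (Matrix.PosSemidef.one : (1 : Matrix (Fin T) (Fin T) ℝ).PosSemidef).1.eigenvalues) *
        (star (Matrix.PosSemidef.one : (1 : Matrix (Fin T) (Fin T) ℝ).PosSemidef).1.eigenvectorUnitary : Matrix (Fin T) (Fin T) ℝ)) = 1 := by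
    have hev : ∀ i, (Matrix.PosSemidef.one : (1 : Matrix (Fin T) (Fin T) ℝ).PosSemidef).1.eigenvalues i = 1 := by
      intro i
      rw [IsHermitian.eigenvalues_eq]
      have h1 := ((Matrix.PosSemidef.one : (1 : Matrix (Fin T) (Fin T) ℝ).PosSemidef).1.eigenvectorBasis).orthonormal.1 i
      have h2 := real_inner_self_eq_norm_sq ((Matrix.PosSemidef.one : (1 : Matrix (Fin T) (Fin T) ℝ).PosSemidef).1.eigenvectorBasis i)
      rw [h1, EuclideanSpace.inner_eq_star_dotProduct] at h2
      simpa [one_mulVec] using h2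
    have hd : ((RCLike.ofReal : ℝ → ℝ) ∘ Real.sqrt ∘ (Matrix.PosSemidef.one : (1 : Matrix (Fin T) (Fin T) ℝ).PosSemidef).1.eigenvalues) = fun _ => 1 := by
      funext i; simp [hev i]
    rw [hd, diagonal_one, mul_one]
    simp
  have hfun : (fun z : Fin T → ℝ => b • m + (((Matrix.PosSemidef.one : (1 : Matrix (Fin T) (Fin T) ℝ).PosSemidef).1.eigenvectorUnitary : Matrix (Fin T) (Fin T) ℝ) *
        diagonal ((RCLike.ofReal : ℝ → ℝ) ∘ Real.sqrt ∘ (Matrix.PosSemidef.one : (1 : Matrix (Fin T) (Fin T) ℝ).PosSemidef).1.eigenvalues) *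
        (star (Matrix.PosSemidef.one : (1 : Matrix (Fin T) (Fin T) ℝ).PosSemidef).1.eigenvectorUnitary : Matrix (Fin T) (Fin T) ℝ)) *ᵥ z)
      = fun z i => b * m i + z i := by
    funext z
    rw [hsqrt, Matrix.one_mulVec]
    funext i
    simp [smul_eq_mul]
  rw [_root_.multivariateGaussian, hfun]
  have hmp : ∀ i : Fin T, MeasurePreserving (fun x : ℝ => b * m i + x)
      (gaussianReal 0 1) (gaussianReal (b * m i) 1) := by
    intro i
    refine ⟨by fun_prop, ?_⟩
    have := gaussianReal_map_const_add (μ := 0) (v := 1) (b * m i)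
    rwa [zero_add] at this
  exact (measurePreserving_pi _ _ hmp).map_eq
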